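/- Let f : ℝ^{n−1} → ℝ be Lipschitz and L > max{1, Lip(f)}. Then for every x₀ = (u₀, f(u₀)) ∈ C_f, every y ∈ Γ(x₀), and every x ∈ H_f^−, one has |y − x| ≥ |y − x₀| / (8L). -/

import Mathlib

open MeasureTheory Metric ENNReal Filter Set Topology

noncomputable section

/-- Projection of a point of `ℝ^(m+1)` onto its first `m` coordinates. -/
def proj {m : ℕ} (p : EuclideanSpace ℝ (Fin (m + 1))) : EuclideanSpace ℝ (Fin m) :=
  WithLp.toLp 2 (fun i : Fin m => p i.castSucc)

/-- The open region `H_f^-` below the graph of `f`. -/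
def lowerSet {m : ℕ} (f : EuclideanSpace ℝ (Fin m) → ℝ) :
    Set (EuclideanSpace ℝ (Fin (m + 1))) :=
  {p | p (Fin.last m) < f (proj p)}

/-- The cone `Γ((u₀, f u₀)) = {(u,t) : t - f u₀ > 4 L |u - u₀|}`. -/
def cone {m : ℕ} (f : EuclideanSpace ℝ (Fin m) → ℝ) (L : ℝ)
    (u₀ : EuclideanSpace ℝ (Fin m)) : Set (EuclideanSpace ℝ (Fin (m + 1))) :=
  {p | 4 * L * ‖proj p - u₀‖ < p (Fin.last m) - f u₀}

/-- The point `(u₀, f u₀)` of the graph of `f`. -/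
def graphPoint {m : ℕ} (f : EuclideanSpace ℝ (Fin m) → ℝ)
    (u₀ : EuclideanSpace ℝ (Fin m)) : EuclideanSpace ℝ (Fin (m + 1)) :=
  WithLp.toLp 2 (Fin.snoc (α := fun _ => ℝ) (WithLp.ofLp u₀) (f u₀))


lemma proj_sub {m : ℕ} (p q : EuclideanSpace ℝ (Fin (m + 1))) :
    proj (p - q) = proj p - proj q := by
  ext i; simp [proj]

lemma last_sub {m : ℕ} (p q : EuclideanSpace ℝ (Fin (m + 1))) :
    (p - q) (Fin.last m) = p (Fin.last m) - q (Fin.last m) := by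
  simp

lemma norm_sq_split {m : ℕ} (p : EuclideanSpace ℝ (Fin (m + 1))) :
    ‖p‖ ^ 2 = ‖proj p‖ ^ 2 + (p (Fin.last m)) ^ 2 := by
  have h1 : ‖p‖ ^ 2 = ∑ i : Fin (m + 1), p i ^ 2 := by
    rw [EuclideanSpace.norm_eq, Real.sq_sqrt (by positivity)]
    simp [sq_abs]
  have h2 : ‖proj p‖ ^ 2 = ∑ i : Fin m, p i.castSucc ^ 2 := by
    rw [EuclideanSpace.norm_eq, Real.sq_sqrt (by positivity)]
    simp [proj, sq_abs]
  rw [h1, h2, Fin.sum_univ_castSucc]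

lemma norm_proj_le {m : ℕ} (p : EuclideanSpace ℝ (Fin (m + 1))) :
    ‖proj p‖ ≤ ‖p‖ := by
  have h := norm_sq_split p
  nlinarith [norm_nonneg p, norm_nonneg (proj p), sq_nonneg (p (Fin.last m))]

lemma abs_last_le {m : ℕ} (p : EuclideanSpace ℝ (Fin (m + 1))) :
    |p (Fin.last m)| ≤ ‖p‖ := by
  have h := norm_sq_split p
  have := sq_abs (p (Fin.last m))
  nlinarith [norm_nonneg p, abs_nonneg (p (Fin.last m)), sq_nonneg (‖proj p‖)]

lemma norm_le_split {m : ℕ} (p : EuclideanSpace ℝ (Fin (m + 1))) :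
    ‖p‖ ≤ ‖proj p‖ + |p (Fin.last m)| := by
  have h := norm_sq_split p
  have := sq_abs (p (Fin.last m))
  nlinarith [norm_nonneg p, norm_nonneg (proj p), abs_nonneg (p (Fin.last m)),
    mul_nonneg (norm_nonneg (proj p)) (abs_nonneg (p (Fin.last m)))]

set_option maxHeartbeats 1000000 in
/-- If `f` is Lipschitz, `L > max{1, Lip f}`, `x₀ = (u₀, f u₀) ∈ C_f`,
`y ∈ Γ(x₀)` and `x ∈ H_f^-`, then `|y - x| ≥ |y - x₀| / (8L)`. -/
theorem statement10 (m : ℕ)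
    (f : EuclideanSpace ℝ (Fin m) → ℝ) (Lf : NNReal) (hf : LipschitzWith Lf f)
    (L : ℝ) (hL : max 1 (Lf : ℝ) < L)
    (u₀ : EuclideanSpace ℝ (Fin m))
    (y : EuclideanSpace ℝ (Fin (m + 1))) (hy : y ∈ cone f L u₀)
    (x : EuclideanSpace ℝ (Fin (m + 1))) (hx : x ∈ lowerSet f) :
    ‖y - graphPoint f u₀‖ / (8 * L) ≤ ‖y - x‖ := by
  set v := proj y with hv
  set s := y (Fin.last m) with hs
  set u := proj x with hu
  set t := x (Fin.last m) with ht
  have hL1 : (1 : ℝ) < L := lt_of_le_of_lt (le_max_left _ _) hL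
  have hLf : (Lf : ℝ) < L := lt_of_le_of_lt (le_max_right _ _) hL
  have hLpos : (0 : ℝ) < L := by linarith
  have hcone : 4 * L * ‖v - u₀‖ < s - f u₀ := hy
  have hlow : t < f u := hx
  have hA : 0 < s - f u₀ := by nlinarith [norm_nonneg (v - u₀)]
  -- upper bound for ‖y - x₀‖
  have hprojg : proj (graphPoint f u₀) = u₀ := by
    ext i; simp [proj, graphPoint]
  have hlastg : (graphPoint f u₀) (Fin.last m) = f u₀ := by
    simp [graphPoint]
  have hub : ‖y - graphPoint f u₀‖ ≤ 2 * (s - f u₀) := by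
    have h1 := norm_le_split (y - graphPoint f u₀)
    rw [proj_sub, last_sub, hprojg, hlastg] at h1
    have h2 : |s - f u₀| = s - f u₀ := abs_of_pos hA
    have h3 : ‖v - u₀‖ ≤ (s - f u₀) / (4 * L) := by
      rw [le_div_iff₀ (by linarith)]
      nlinarith
    have h4 : (s - f u₀) / (4 * L) ≤ s - f u₀ := by
      rw [div_le_iff₀ (by linarith)]
      nlinarith
    calc ‖y - graphPoint f u₀‖ ≤ ‖v - u₀‖ + |s - f u₀| := h1
      _ ≤ 2 * (s - f u₀) := by rw [h2]; linarith
  -- lower bound for ‖y - x‖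
  have hlb : (s - f u₀) / (4 * L) ≤ ‖y - x‖ := by
    by_cases hc : (s - f u₀) / (4 * L) ≤ ‖v - u‖
    · have := norm_proj_le (y - x)
      rw [proj_sub] at this
      linarith
    · push_neg at hc
      have huu : ‖u - u₀‖ < (s - f u₀) / (2 * L) := by
        have h5 : ‖u - u₀‖ ≤ ‖u - v‖ + ‖v - u₀‖ := norm_sub_le_norm_sub_add_norm_sub u v u₀
        have h6 : ‖u - v‖ = ‖v - u‖ := norm_sub_rev _ _
        have h3 : ‖v - u₀‖ ≤ (s - f u₀) / (4 * L) := by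
          rw [le_div_iff₀ (by linarith)]
          nlinarith
        have hdiveq : (s - f u₀) / (4 * L) + (s - f u₀) / (4 * L) = (s - f u₀) / (2 * L) := by
          field_simp; ring
        linarith
      have hfu : |f u₀ - f u| ≤ L * ‖u - u₀‖ := by
        have := hf.dist_le_mul u₀ u
        rw [Real.dist_eq] at this
        have hd : dist u₀ u = ‖u - u₀‖ := by rw [dist_comm, dist_eq_norm]
        rw [hd] at this
        calc |f u₀ - f u| ≤ (Lf : ℝ) * ‖u - u₀‖ := this
          _ ≤ L * ‖u - u₀‖ := by nlinarith [norm_nonneg (u - u₀)]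
      have hst : (s - f u₀) / 2 < s - t := by
        have h7 : -|f u₀ - f u| ≤ f u₀ - f u := neg_abs_le _
        have h8 : L * ‖u - u₀‖ < (s - f u₀) / 2 := by
          have h8a := mul_lt_mul_of_pos_left huu hLpos
          have heq : L * ((s - f u₀) / (2 * L)) = (s - f u₀) / 2 := by
            field_simp
          linarith [heq ▸ h8a]
        linarith
      have h9 : |s - t| ≤ ‖y - x‖ := by
        have := abs_last_le (y - x)
        rw [last_sub] at this
        exact this
      have h10 : (s - f u₀) / (4 * L) ≤ (s - f u₀) / 2 := by
        rw [div_le_div_iff₀ (by linarith) (by norm_num)]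
        nlinarith
      calc (s - f u₀) / (4 * L) ≤ (s - f u₀) / 2 := h10
        _ ≤ s - t := le_of_lt hst
        _ ≤ |s - t| := le_abs_self _
        _ ≤ ‖y - x‖ := h9
  have hfinal : ‖y - graphPoint f u₀‖ / (8 * L) ≤ (s - f u₀) / (4 * L) := by
    rw [div_le_div_iff₀ (by linarith) (by linarith)]
    have hmul : ‖y - graphPoint f u₀‖ * (4 * L) ≤ 2 * (s - f u₀) * (4 * L) :=
      mul_le_mul_of_nonneg_right hub (by linarith)
    linarith
  exact hfinal.trans hlb
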